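/- Let M be a finitely generated R-module over a commutative ring R, S_M = {m ∈ mSpec(R) : dim_{R/m}(M/mM) ≥ 2}, and T = R \ ∪_{m ∈ S_M} m. Then for every m ∈ S_M, the localization T^{-1}m is a maximal ideal of T^{-1}R, and dim_{T^{-1}R/T^{-1}m}(T^{-1}M/T^{-1}(mM)) = dim_{R/m}(M/mM); consequently every maximal ideal of T^{-1}R is of the form T^{-1}m with m ∈ S_M, and S_{T^{-1}M} = mSpec(T^{-1}R). -/

import Mathlib

universe u

/-- The set of maximal ideals `m` of `R` with `dim_{R/m} (M/mM) ≥ 2`. -/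
def SMax (R M : Type u) [CommRing R] [AddCommGroup M] [Module R M] :
    Set (MaximalSpectrum R) :=
  {m | 2 ≤ Module.rank (R ⧸ m.asIdeal) (M ⧸ (m.asIdeal • ⊤ : Submodule R M))}

/-- The multiplicative set `T = R \ ⋃_{m ∈ S_M} m`. -/
def TSet (R M : Type u) [CommRing R] [AddCommGroup M] [Module R M] : Submonoid R where
  carrier := {x : R | ∀ m ∈ SMax R M, x ∉ m.asIdeal}
  one_mem' := fun m _ h1 => m.2.ne_top ((Ideal.eq_top_iff_one _).mpr h1)
  mul_mem' := fun {a b} ha hb m hm hab =>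
    (m.2.isPrime.mem_or_mem hab).elim (ha m hm) (hb m hm)

open TensorProduct

section Wedge

attribute [local instance] Ideal.Quotient.field

variable {R M : Type u} [CommRing R] [AddCommGroup M] [Module R M]

/-- The submodule of "squares" in `M ⊗ M`. -/
def symSub (R M : Type u) [CommRing R] [AddCommGroup M] [Module R M] :
    Submodule R (M ⊗[R] M) := Submodule.span R {z | ∃ x : M, z = x ⊗ₜ[R] x}

/-- A stand-in for the second exterior power of `M`. -/
abbrev Wedge (R M : Type u) [CommRing R] [AddCommGroup M] [Module R M] :=
  (M ⊗[R] M) ⧸ symSub R M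

instance [Module.Finite R M] : Module.Finite R (Wedge R M) :=
  Module.Finite.of_surjective (symSub R M).mkQ (Submodule.Quotient.mk_surjective _)

lemma tmul_mem_smul_top {I : Ideal R} {u : M} (hu : u ∈ (I • ⊤ : Submodule R M)) (z : M) :
    u ⊗ₜ[R] z ∈ (I • ⊤ : Submodule R (M ⊗[R] M)) := by
  refine Submodule.smul_induction_on hu (fun a ha v _ => ?_) (fun x y hx hy => ?_)
  · rw [← TensorProduct.smul_tmul']
    exact Submodule.smul_mem_smul ha trivial
  · rw [TensorProduct.add_tmul]; exact add_mem hx hy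

lemma mem_smul_tmul {I : Ideal R} {u : M} (hu : u ∈ (I • ⊤ : Submodule R M)) (z : M) :
    z ⊗ₜ[R] u ∈ (I • ⊤ : Submodule R (M ⊗[R] M)) := by
  refine Submodule.smul_induction_on hu (fun a ha v _ => ?_) (fun x y hx hy => ?_)
  · rw [TensorProduct.tmul_smul]
    exact Submodule.smul_mem_smul ha trivial
  · rw [TensorProduct.tmul_add]; exact add_mem hx hy

lemma mkQ_mem_smul_top {I : Ideal R} {w : M ⊗[R] M}
    (hw : w ∈ (I • ⊤ : Submodule R (M ⊗[R] M))) :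
    (symSub R M).mkQ w ∈ (I • ⊤ : Submodule R (Wedge R M)) := by
  have h1 : ((I • ⊤ : Submodule R (M ⊗[R] M))).map (symSub R M).mkQ
      ≤ (I • ⊤ : Submodule R (Wedge R M)) := by
    rw [Submodule.map_smul'']
    exact Submodule.smul_mono le_rfl le_top
  exact h1 (Submodule.mem_map_of_mem hw)

lemma wedge_smul_top_of_rank_le_one (m : Ideal R) [m.IsMaximal]
    (h : Module.rank (R ⧸ m) (M ⧸ (m • ⊤ : Submodule R M)) ≤ 1) :
    (m • ⊤ : Submodule R (Wedge R M)) = ⊤ := by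
  obtain ⟨v₀, hv₀⟩ := rank_le_one_iff.mp h
  obtain ⟨e, he⟩ := Submodule.Quotient.mk_surjective _ v₀
  have hx : ∀ x : M, ∃ r : R, x - r • e ∈ (m • ⊤ : Submodule R M) := by
    intro x
    obtain ⟨c, hc⟩ := hv₀ (Submodule.Quotient.mk x)
    obtain ⟨r, rfl⟩ := Ideal.Quotient.mk_surjective c
    refine ⟨r, (Submodule.Quotient.eq _).mp ?_⟩
    rw [← he, Module.Quotient.mk_smul_mk] at hc
    exact hc.symm
  have hee : (symSub R M).mkQ (e ⊗ₜ[R] e) = 0 := by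
    rw [Submodule.mkQ_apply, Submodule.Quotient.mk_eq_zero]
    exact Submodule.subset_span ⟨e, rfl⟩
  have key : ∀ x y : M, (symSub R M).mkQ (x ⊗ₜ[R] y) ∈ (m • ⊤ : Submodule R (Wedge R M)) := by
    intro x y
    obtain ⟨r, hr⟩ := hx x
    obtain ⟨r', hr'⟩ := hx y
    have hdec : x ⊗ₜ[R] y = (x - r • e) ⊗ₜ[R] y + (r • e) ⊗ₜ[R] (y - r' • e)
        + (r' * r) • (e ⊗ₜ[R] e) := by
      simp only [TensorProduct.sub_tmul, TensorProduct.tmul_sub, ← TensorProduct.smul_tmul',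
        TensorProduct.tmul_smul, smul_smul]
      abel
    rw [hdec, map_add, map_add, map_smul, hee, smul_zero, add_zero]
    exact add_mem (mkQ_mem_smul_top (tmul_mem_smul_top hr y))
      (mkQ_mem_smul_top (mem_smul_tmul hr' (r • e)))
  rw [eq_top_iff]
  intro w _
  obtain ⟨w', rfl⟩ := Submodule.Quotient.mk_surjective _ w
  have hw' : w' ∈ Submodule.span R {t : M ⊗[R] M | ∃ a b, a ⊗ₜ[R] b = t} := by
    rw [TensorProduct.span_tmul_eq_top]; trivial
  refine Submodule.span_induction ?_ ?_ ?_ ?_ hw'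
  · rintro _ ⟨a, b, rfl⟩
    exact key a b
  · rw [← Submodule.mkQ_apply, map_zero]; exact zero_mem _
  · intro a b _ _ ha hb
    rw [← Submodule.mkQ_apply] at ha hb ⊢
    rw [map_add]; exact add_mem ha hb
  · intro c a _ ha
    rw [← Submodule.mkQ_apply] at ha ⊢
    rw [map_smul]; exact Submodule.smul_mem _ _ ha

lemma rank_le_one_of_wedge_smul_top (m : Ideal R) [m.IsMaximal]
    (h : (m • ⊤ : Submodule R (Wedge R M)) = ⊤) :
    Module.rank (R ⧸ m) (M ⧸ (m • ⊤ : Submodule R M)) ≤ 1 := by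
  by_contra hlt
  rw [not_le] at hlt
  have h2 : ((2 : ℕ) : Cardinal) ≤ Module.rank (R ⧸ m) (M ⧸ (m • ⊤ : Submodule R M)) := by
    rw [show ((2 : ℕ) : Cardinal) = Order.succ (1 : Cardinal) by
      rw [Cardinal.nat_succ, Nat.cast_one]]
    exact Order.succ_le_of_lt hlt
  classical
  obtain ⟨s, hs2, hli⟩ := le_rank_iff_exists_linearIndependent_finset.mp h2
  rw [Finset.card_eq_two] at hs2
  obtain ⟨a, b, hab, hs⟩ := hs2
  replace hli := hli.linearIndepOn_id
  have ha' : a ∈ hli.extend (Set.subset_univ _) := hli.subset_extend _ (by simp [hs])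
  have hb' : b ∈ hli.extend (Set.subset_univ _) := hli.subset_extend _ (by simp [hs])
  set B := Module.Basis.extend hli with hB
  set f := B.coord ⟨a, ha'⟩ with hf
  set g := B.coord ⟨b, hb'⟩ with hg
  have hBa : B ⟨a, ha'⟩ = a := Module.Basis.extend_apply_self hli _
  have hBb : B ⟨b, hb'⟩ = b := Module.Basis.extend_apply_self hli _
  have hne : (⟨a, ha'⟩ : hli.extend (Set.subset_univ _)) ≠ ⟨b, hb'⟩ := by
    intro hh; exact hab (congrArg Subtype.val hh)
  have hra := B.repr_self ⟨a, ha'⟩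
  rw [hBa] at hra
  have hrb := B.repr_self ⟨b, hb'⟩
  rw [hBb] at hrb
  have hfa : f a = 1 := by rw [hf, Module.Basis.coord_apply, hra, Finsupp.single_eq_same]
  have hfb : f b = 0 := by
    rw [hf, Module.Basis.coord_apply, hrb, Finsupp.single_eq_of_ne hne]
  have hga : g a = 0 := by
    rw [hg, Module.Basis.coord_apply, hra, Finsupp.single_eq_of_ne (Ne.symm hne)]
  have hgb : g b = 1 := by rw [hg, Module.Basis.coord_apply, hrb, Finsupp.single_eq_same]
  obtain ⟨x, hxa⟩ := Submodule.Quotient.mk_surjective _ a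
  obtain ⟨y, hyb⟩ := Submodule.Quotient.mk_surjective _ b
  let f' : M →ₗ[R] R ⧸ m := (f.restrictScalars R).comp (m • ⊤ : Submodule R M).mkQ
  let g' : M →ₗ[R] R ⧸ m := (g.restrictScalars R).comp (m • ⊤ : Submodule R M).mkQ
  let Bl : M →ₗ[R] M →ₗ[R] R ⧸ m := LinearMap.mk₂ R (fun u v => f' u * g' v - f' v * g' u)
    (fun u₁ u₂ v => by simp only [map_add]; ring)
    (fun c u v => by
      simp only [map_smul, smul_sub, smul_mul_assoc, mul_smul_comm])
    (fun u v₁ v₂ => by simp only [map_add]; ring)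
    (fun c u v => by
      simp only [map_smul, smul_sub, smul_mul_assoc, mul_smul_comm])
  let θ : (M ⊗[R] M) →ₗ[R] R ⧸ m := TensorProduct.lift Bl
  have hθ : ∀ u v : M, θ (u ⊗ₜ[R] v) = f' u * g' v - f' v * g' u := fun u v => by
    simp [θ, Bl, TensorProduct.lift.tmul]
  have hsym : symSub R M ≤ LinearMap.ker θ := by
    rw [symSub, Submodule.span_le]
    rintro _ ⟨z, rfl⟩
    simp [LinearMap.mem_ker, hθ]
  let η : Wedge R M →ₗ[R] R ⧸ m := Submodule.liftQ _ θ hsym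
  have h1 : η (Submodule.Quotient.mk (x ⊗ₜ[R] y)) = 1 := by
    rw [show η (Submodule.Quotient.mk (x ⊗ₜ[R] y)) = θ (x ⊗ₜ[R] y) from
      Submodule.liftQ_apply _ _ _, hθ]
    simp only [f', g', LinearMap.comp_apply, LinearMap.coe_restrictScalars,
      Submodule.mkQ_apply, hxa, hyb, hfa, hfb, hga, hgb]
    ring
  have h0 : ∀ w ∈ (m • ⊤ : Submodule R (Wedge R M)), η w = 0 := by
    intro w hw
    refine Submodule.smul_induction_on hw (fun c hc n _ => ?_)
      (fun w1 w2 e1 e2 => by rw [map_add, e1, e2, add_zero])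
    rw [map_smul, show c • η n = Ideal.Quotient.mk m c * η n from rfl,
      Ideal.Quotient.eq_zero_iff_mem.mpr hc, zero_mul]
  exact one_ne_zero (α := R ⧸ m) (h1.symm.trans (h0 _ (by rw [h]; trivial)))

lemma two_le_rank_iff (m : Ideal R) [m.IsMaximal] :
    2 ≤ Module.rank (R ⧸ m) (M ⧸ (m • ⊤ : Submodule R M)) ↔
      (m • ⊤ : Submodule R (Wedge R M)) ≠ ⊤ := by
  have h2s : (2 : Cardinal) = Order.succ (1 : Cardinal) := by
    rw [show (2 : Cardinal) = ((2 : ℕ) : Cardinal) by norm_num, Cardinal.nat_succ, Nat.cast_one]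
  constructor
  · intro h2 htop
    have hle := rank_le_one_of_wedge_smul_top (M := M) m htop
    have : (2 : Cardinal) ≤ 1 := h2.trans hle
    rw [h2s, Order.succ_le_iff] at this
    exact lt_irrefl _ this
  · intro hne
    by_contra hlt
    rw [not_le, h2s, Order.lt_succ_iff] at hlt
    exact hne (wedge_smul_top_of_rank_le_one m hlt)

end Wedge

section LocalizationPart

variable (R M : Type u) [CommRing R] [AddCommGroup M] [Module R M]

set_option maxHeartbeats 2000000 in
theorem aux_part1 (m : MaximalSpectrum R) (hm : m ∈ SMax R M) :
    (Ideal.map (algebraMap R (Localization (TSet R M))) m.asIdeal).IsMaximal ∧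
      Module.rank
        (Localization (TSet R M) ⧸
          Ideal.map (algebraMap R (Localization (TSet R M))) m.asIdeal)
        (LocalizedModule (TSet R M) M ⧸
          (Ideal.map (algebraMap R (Localization (TSet R M))) m.asIdeal • ⊤ :
            Submodule (Localization (TSet R M)) (LocalizedModule (TSet R M) M)))
        = Module.rank (R ⧸ m.asIdeal) (M ⧸ (m.asIdeal • ⊤ : Submodule R M)) := by
  haveI := m.2
  set A := Localization (TSet R M) with hA
  set J := Ideal.map (algebraMap R A) m.asIdeal with hJdef
  have hdisj : Disjoint (TSet R M : Set R) (m.asIdeal : Set R) :=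
    Set.disjoint_left.mpr fun t ht => ht m hm
  have hprime : J.IsPrime :=
    IsLocalization.isPrime_of_isPrime_disjoint (TSet R M) A m.asIdeal m.2.isPrime hdisj
  have hcomap : J.comap (algebraMap R A) = m.asIdeal :=
    IsLocalization.under_map_of_isPrime_disjoint (TSet R M) A m.2.isPrime hdisj
  have hmax : J.IsMaximal := by
    rw [Ideal.isMaximal_def]
    refine ⟨hprime.ne_top, fun b hb => ?_⟩
    have hcle : m.asIdeal ≤ b.comap (algebraMap R A) := hcomap ▸ Ideal.comap_mono hb.le
    by_cases htop : b.comap (algebraMap R A) = ⊤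
    · rw [Ideal.eq_top_iff_one]
      rw [Ideal.eq_top_iff_one] at htop
      simpa using htop
    · exfalso
      have heq := m.2.eq_of_le htop hcle
      have hJb : J = b := by rw [hJdef, heq, IsLocalization.map_comap (TSet R M) A]
      exact hb.ne hJb
  refine ⟨hmax, ?_⟩
  -- notation
  set lm := LocalizedModule.mkLinearMap (TSet R M) M with hlm
  set W := LocalizedModule (TSet R M) M with hW
  -- elements of m•⊤ map into J•⊤
  have base : ∀ w ∈ (m.asIdeal • ⊤ : Submodule R M), lm w ∈ (J • ⊤ : Submodule A W) := by
    intro w hw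
    refine Submodule.smul_induction_on hw (fun a ha v _ => ?_)
      (fun x y hx hy => by rw [map_add]; exact add_mem hx hy)
    rw [map_smul, ← algebraMap_smul (A := A)]
    exact Submodule.smul_mem_smul (Ideal.mem_map_of_mem _ ha) trivial
  -- J • ⊤ is the localization of m • ⊤
  have hJT : (J • ⊤ : Submodule A W) =
      (m.asIdeal • ⊤ : Submodule R M).localized' A (TSet R M) lm := by
    apply le_antisymm
    · rw [Submodule.smul_le]
      intro r hr n _
      have hr' : r ∈ Ideal.span ((algebraMap R A) '' m.asIdeal) := hr
      refine Submodule.span_induction (p := fun r _ => ∀ n : W, r • n ∈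
        (m.asIdeal • ⊤ : Submodule R M).localized' A (TSet R M) lm) ?_ ?_ ?_ ?_ hr' n
      · rintro _ ⟨a, ha, rfl⟩ n
        obtain ⟨⟨x, t⟩, hxt⟩ := IsLocalizedModule.mk'_surjective (TSet R M) lm n
        simp only [Function.uncurry_apply_pair] at hxt
        rw [← hxt, algebraMap_smul, ← IsLocalizedModule.mk'_smul]
        exact ⟨a • x, Submodule.smul_mem_smul ha trivial, t, rfl⟩
      · intro n; rw [zero_smul]; exact zero_mem _
      · intro r₁ r₂ _ _ h1 h2 n
        rw [add_smul]; exact add_mem (h1 n) (h2 n)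
      · intro c r _ h1 n
        rw [smul_eq_mul, mul_smul]
        exact Submodule.smul_mem _ c (h1 n)
    · rintro z ⟨w, hw, t, rfl⟩
      have hz : IsLocalizedModule.mk' lm w t = IsLocalization.mk' A (1 : R) t • lm w := by
        rw [← IsLocalizedModule.mk'_one (TSet R M), IsLocalizedModule.mk'_smul_mk',
          one_smul, mul_one]
      rw [hz]
      exact Submodule.smul_mem _ _ (base w hw)
  -- inverses modulo m for elements of T
  have hinv : ∀ t : R, t ∉ m.asIdeal → ∃ s c : R, c ∈ m.asIdeal ∧ s * t + c = 1 := by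
    intro t ht
    obtain ⟨s, c, hc, hsc⟩ := m.2.exists_inv ht
    exact ⟨s, c, hc, hsc⟩
  -- the residue field map
  have hcle : m.asIdeal ≤ J.comap (algebraMap R A) := le_of_eq hcomap.symm
  set i := Ideal.quotientMap J (algebraMap R A) hcle with hi
  have iinj : Function.Injective i := Ideal.quotientMap_injective' (le_of_eq hcomap)
  have isurj : Function.Surjective i := by
    intro κ
    obtain ⟨a, rfl⟩ := Ideal.Quotient.mk_surjective κ
    obtain ⟨⟨r, t⟩, rfl⟩ := IsLocalization.mk'_surjective (TSet R M) a
    dsimp only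
    obtain ⟨s, c, hc, hsc⟩ := hinv t (t.2 m hm)
    refine ⟨Ideal.Quotient.mk m.asIdeal (s * r), ?_⟩
    rw [hi, Ideal.quotientMap_mk, Ideal.Quotient.eq]
    have key : IsLocalization.mk' A r t
        = algebraMap R A (s * r) + IsLocalization.mk' A r t * algebraMap R A c := by
      calc IsLocalization.mk' A r t
          = IsLocalization.mk' A r t * algebraMap R A (s * t + c) := by
            rw [hsc, map_one, mul_one]
        _ = (IsLocalization.mk' A r t * algebraMap R A (t : R)) * algebraMap R A s
            + IsLocalization.mk' A r t * algebraMap R A c := by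
            rw [map_add, map_mul]; ring
        _ = algebraMap R A (s * r) + IsLocalization.mk' A r t * algebraMap R A c := by
            rw [IsLocalization.mk'_spec, ← map_mul, mul_comm]
    rw [key]
    have : algebraMap R A (s * r) - (algebraMap R A (s * r)
        + IsLocalization.mk' A r t * algebraMap R A c)
        = -(IsLocalization.mk' A r t * algebraMap R A c) := by ring
    rw [this]
    exact neg_mem (Ideal.mul_mem_left _ _ (Ideal.mem_map_of_mem _ hc))
  -- the module map
  set g : M →ₗ[R] (W ⧸ (J • ⊤ : Submodule A W)) :=
    (((J • ⊤ : Submodule A W).mkQ).restrictScalars R).comp lm with hg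
  have hgapp : ∀ x : M, g x = Submodule.Quotient.mk (lm x) := fun x => rfl
  have hker1 : (m.asIdeal • ⊤ : Submodule R M) ≤ LinearMap.ker g := by
    intro x hx
    rw [LinearMap.mem_ker, hgapp, Submodule.Quotient.mk_eq_zero]
    exact base x hx
  have hker2 : LinearMap.ker g ≤ (m.asIdeal • ⊤ : Submodule R M) := by
    intro x hx
    rw [LinearMap.mem_ker, hgapp, Submodule.Quotient.mk_eq_zero, hJT] at hx
    obtain ⟨w, hw, t, heq⟩ := hx
    rw [IsLocalizedModule.mk'_eq_iff] at heq
    have heq' : lm w = lm ((t : R) • x) := by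
      rw [heq, map_smul]; rfl
    obtain ⟨u, hu⟩ := IsLocalizedModule.exists_of_eq (S := TSet R M) (f := lm) heq'
    rw [Submonoid.smul_def, Submonoid.smul_def] at hu
    have humem : ((u : R) * (t : R)) • x ∈ (m.asIdeal • ⊤ : Submodule R M) := by
      rw [mul_smul, ← hu]
      exact Submodule.smul_mem _ _ hw
    have hut : ((u * t : TSet R M) : R) ∉ m.asIdeal := (u * t).2 m hm
    obtain ⟨s, c, hc, hsc⟩ := hinv _ hut
    have hone : s * ((u : R) * (t : R)) + c = 1 := by rw [← Submonoid.coe_mul]; exact hsc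
    have hxeq : x = s • (((u : R) * (t : R)) • x) + c • x := by
      rw [smul_smul, ← add_smul, hone, one_smul]
    have hmem2 := add_mem (Submodule.smul_mem _ s humem)
      (Submodule.smul_mem_smul hc (Submodule.mem_top (x := x)))
    rwa [← hxeq] at hmem2
  set gbar : (M ⧸ (m.asIdeal • ⊤ : Submodule R M)) →ₗ[R] (W ⧸ (J • ⊤ : Submodule A W)) :=
    Submodule.liftQ _ g hker1 with hgbar
  have hgbar_mk : ∀ x : M, gbar (Submodule.Quotient.mk x) = Submodule.Quotient.mk (lm x) :=
    fun x => rfl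
  have ginj : Function.Injective gbar := by
    rw [← LinearMap.ker_eq_bot]
    exact Submodule.ker_liftQ_eq_bot _ _ _ hker2
  have gsurj : Function.Surjective gbar := by
    intro wq
    obtain ⟨z, rfl⟩ := Submodule.Quotient.mk_surjective _ wq
    obtain ⟨⟨x, t⟩, hxt⟩ := IsLocalizedModule.mk'_surjective (TSet R M) lm z
    simp only [Function.uncurry_apply_pair] at hxt
    obtain ⟨s, c, hc, hsc⟩ := hinv (t : R) (t.2 m hm)
    refine ⟨Submodule.Quotient.mk (s • x), ?_⟩
    rw [hgbar_mk, Submodule.Quotient.eq]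
    have h1 : lm (s • x) = IsLocalizedModule.mk' lm (((t : R) * s) • x) t := by
      rw [show ((t : R) * s) • x = t • (s • x) from by rw [Submonoid.smul_def, mul_smul],
        IsLocalizedModule.mk'_cancel]
    have hmc : ((t : R) * s) • x - x = (-c) • x := by
      rw [show (-c : R) = (t : R) * s - 1 from by linear_combination -hsc, sub_smul, one_smul]
    have h2 : IsLocalizedModule.mk' lm (((t : R) * s) • x) t - IsLocalizedModule.mk' lm x t
        = IsLocalizedModule.mk' lm ((-c) • x) t := by
      rw [← IsLocalizedModule.mk'_sub, hmc]
    rw [← hxt, h1, h2, show IsLocalizedModule.mk' lm ((-c) • x) t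
        = algebraMap R A (-c) • IsLocalizedModule.mk' lm x t from by
      rw [IsLocalizedModule.mk'_smul, algebraMap_smul]]
    exact Submodule.smul_mem_smul (Ideal.mem_map_of_mem _ (neg_mem hc)) trivial
  set j : (M ⧸ (m.asIdeal • ⊤ : Submodule R M)) ≃+ (W ⧸ (J • ⊤ : Submodule A W)) :=
    AddEquiv.ofBijective (gbar.toAddMonoidHom) ⟨ginj, gsurj⟩ with hj
  have hcomp : ∀ (r : R ⧸ m.asIdeal) (v : M ⧸ (m.asIdeal • ⊤ : Submodule R M)),
      j (r • v) = i r • j v := by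
    intro r v
    obtain ⟨r₀, rfl⟩ := Ideal.Quotient.mk_surjective r
    obtain ⟨x, rfl⟩ := Submodule.Quotient.mk_surjective _ v
    show gbar (Ideal.Quotient.mk m.asIdeal r₀ • Submodule.Quotient.mk x)
      = i (Ideal.Quotient.mk m.asIdeal r₀) • gbar (Submodule.Quotient.mk x)
    rw [hi, Ideal.quotientMap_mk]
    rw [show (Ideal.Quotient.mk m.asIdeal r₀ • Submodule.Quotient.mk x :
        M ⧸ (m.asIdeal • ⊤ : Submodule R M)) = Submodule.Quotient.mk (r₀ • x) from rfl]
    rw [hgbar_mk, hgbar_mk]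
    rw [show (Ideal.Quotient.mk J (algebraMap R A r₀) • Submodule.Quotient.mk (lm x) :
        W ⧸ (J • ⊤ : Submodule A W)) = Submodule.Quotient.mk (algebraMap R A r₀ • lm x) from rfl]
    rw [algebraMap_smul, map_smul]
  exact (rank_eq_of_equiv_equiv (⟨i, map_zero i⟩ : ZeroHom (R ⧸ m.asIdeal) (A ⧸ J)) j
    ⟨iinj, isurj⟩ hcomp).symm

set_option maxHeartbeats 1000000 in
theorem aux_part2 [Module.Finite R M] (J : Ideal (Localization (TSet R M))) (hJmax : J.IsMaximal) :
    ∃ m ∈ SMax R M, J = Ideal.map (algebraMap R (Localization (TSet R M))) m.asIdeal := by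
  set A := Localization (TSet R M) with hA
  have hdisjT : ∀ t ∈ TSet R M, (algebraMap R A) t ∉ J := fun t ht hmem =>
    hJmax.ne_top (J.eq_top_of_isUnit_mem hmem (IsLocalization.map_units A ⟨t, ht⟩))
  set p := J.comap (algebraMap R A) with hp
  have hpJ : Ideal.map (algebraMap R A) p = J := IsLocalization.map_comap (TSet R M) A J
  set I := Module.annihilator R (Wedge R M) with hI
  have hIle : ∀ m' ∈ SMax R M, I ≤ m'.asIdeal := by
    intro m' hm' r hr
    by_contra hrm
    haveI := m'.2
    obtain ⟨s, c, hc, hsc⟩ := m'.2.exists_inv hrm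
    have htop : (m'.asIdeal • ⊤ : Submodule R (Wedge R M)) = ⊤ := by
      rw [eq_top_iff]
      intro n _
      have h1 : (s * r + c) • n = n := by rw [hsc, one_smul]
      have h2 : (s * r + c) • n = c • n := by
        rw [add_smul, mul_smul, Module.mem_annihilator.mp hr n, smul_zero, zero_add]
      rw [← h1, h2]
      exact Submodule.smul_mem_smul hc trivial
    exact (two_le_rank_iff (M := M) m'.asIdeal).mp hm' htop
  have hmem : ∀ m' : MaximalSpectrum R, I ≤ m'.asIdeal → m' ∈ SMax R M := by
    intro m' hle
    haveI := m'.2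
    show 2 ≤ Module.rank (R ⧸ m'.asIdeal) (M ⧸ (m'.asIdeal • ⊤ : Submodule R M))
    rw [two_le_rank_iff (M := M) m'.asIdeal]
    intro htop
    have hfg : (⊤ : Submodule R (Wedge R M)).FG := Module.finite_def.mp inferInstance
    obtain ⟨r, hr1, hr0⟩ := Submodule.exists_sub_one_mem_and_smul_eq_zero_of_fg_of_le_smul
      m'.asIdeal ⊤ hfg (le_of_eq htop.symm)
    have hrI : r ∈ I := Module.mem_annihilator.mpr (fun n => hr0 n trivial)
    have h1m : (1 : R) ∈ m'.asIdeal := by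
      have := m'.asIdeal.sub_mem (hle hrI) hr1
      simpa using this
    exact m'.2.ne_top ((Ideal.eq_top_iff_one _).mpr h1m)
  have hsub : ∀ x ∈ p, ∃ m' ∈ SMax R M, x ∈ m'.asIdeal := by
    intro x hx
    by_contra hcon
    push_neg at hcon
    exact hdisjT x (fun m' hm' => hcon m' hm') (Ideal.mem_comap.mp hx)
  have hne : p ⊔ I ≠ ⊤ := by
    intro htop
    rw [Ideal.eq_top_iff_one] at htop
    obtain ⟨x, hxp, iel, hiI, hxi⟩ := Submodule.mem_sup.mp htop
    obtain ⟨m₀, hm₀, hxm₀⟩ := hsub x hxp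
    have h1 : (1 : R) ∈ m₀.asIdeal := hxi ▸ add_mem hxm₀ (hIle m₀ hm₀ hiI)
    exact m₀.2.ne_top ((Ideal.eq_top_iff_one _).mpr h1)
  obtain ⟨Mx, hMx, hleMx⟩ := Ideal.exists_le_maximal _ hne
  set m' : MaximalSpectrum R := ⟨Mx, hMx⟩ with hm'
  have hm'S : m' ∈ SMax R M := hmem m' (le_trans le_sup_right hleMx)
  refine ⟨m', hm'S, ?_⟩
  have hJle : J ≤ Ideal.map (algebraMap R A) m'.asIdeal := by
    rw [← hpJ]
    exact Ideal.map_mono (le_trans le_sup_left hleMx)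
  have hne' : Ideal.map (algebraMap R A) m'.asIdeal ≠ ⊤ :=
    (IsLocalization.isPrime_of_isPrime_disjoint (TSet R M) A _ hMx.isPrime
      (Set.disjoint_left.mpr fun t ht => ht m' hm'S)).ne_top
  exact hJmax.eq_of_le hne' hJle

end LocalizationPart

/-- Let `M` be a finitely generated `R`-module, `S_M` the set of maximal ideals with
`dim_{R/m}(M/mM) ≥ 2`, and `T = R \ ⋃_{m ∈ S_M} m`. Then for every `m ∈ S_M` the ideal
`T⁻¹m` of `T⁻¹R` is maximal and
`dim_{T⁻¹R/T⁻¹m}(T⁻¹M/T⁻¹(mM)) = dim_{R/m}(M/mM)`; consequently every maximal ideal of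
`T⁻¹R` has the form `T⁻¹m` with `m ∈ S_M`, and `S_{T⁻¹M} = mSpec(T⁻¹R)`. -/
theorem stmt19 (R M : Type u) [CommRing R] [AddCommGroup M] [Module R M]
    [Module.Finite R M] :
    (∀ m : MaximalSpectrum R, m ∈ SMax R M →
      (Ideal.map (algebraMap R (Localization (TSet R M))) m.asIdeal).IsMaximal ∧
      Module.rank
        (Localization (TSet R M) ⧸
          Ideal.map (algebraMap R (Localization (TSet R M))) m.asIdeal)
        (LocalizedModule (TSet R M) M ⧸
          (Ideal.map (algebraMap R (Localization (TSet R M))) m.asIdeal • ⊤ :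
            Submodule (Localization (TSet R M)) (LocalizedModule (TSet R M) M)))
        = Module.rank (R ⧸ m.asIdeal) (M ⧸ (m.asIdeal • ⊤ : Submodule R M))) ∧
    (∀ J : Ideal (Localization (TSet R M)), J.IsMaximal →
      ∃ m ∈ SMax R M,
        J = Ideal.map (algebraMap R (Localization (TSet R M))) m.asIdeal) ∧
    (∀ J : Ideal (Localization (TSet R M)), J.IsMaximal →
      2 ≤ Module.rank (Localization (TSet R M) ⧸ J)
        (LocalizedModule (TSet R M) M ⧸
          (J • ⊤ : Submodule (Localization (TSet R M)) (LocalizedModule (TSet R M) M)))) := by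
  refine ⟨aux_part1 R M, aux_part2 R M, ?_⟩
  intro J hJ
  obtain ⟨m, hm, rfl⟩ := aux_part2 R M J hJ
  rw [(aux_part1 R M m hm).2]
  exact hm
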